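/- Every (ε,δ)-triple (A,B,C) over F is isomorphic to a direct sum (I_k, B₀, C₀) ⊕ (A₁, B₁, C₁) in which (I_k, B₀, C₀) is strictly regular (k ≥ 0, B₀* = εB₀, C₀* = δC₀ of size k×k) and (A₁, B₁, C₁) is strictly singular. -/

import Mathlib

open Matrix

/-- Cast a matrix along equalities of its dimensions. -/
def castM {F : Type*} {m n m' n' : ℕ} (hm : m = m') (hn : n = n')
    (M : Matrix (Fin m') (Fin n') F) : Matrix (Fin m) (Fin n) F :=
  M.submatrix (Fin.cast hm) (Fin.cast hn)

/-- The adjoint `M* = (M̃)ᵀ` of a matrix with respect to the involution `inv`. -/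
def adjM {F : Type*} (inv : F → F) {p q : ℕ} (M : Matrix (Fin p) (Fin q) F) :
    Matrix (Fin q) (Fin p) F :=
  Matrix.of fun i j => inv (M j i)

/-- Direct sum of two rectangular matrices (blocks placed diagonally, zeros elsewhere). -/
def dsumM {F : Type*} [Zero F] {m₁ n₁ m₂ n₂ : ℕ} (M₁ : Matrix (Fin m₁) (Fin n₁) F)
    (M₂ : Matrix (Fin m₂) (Fin n₂) F) :
    Matrix (Fin (m₁ + m₂)) (Fin (n₁ + n₂)) F :=
  Matrix.reindex finSumFinEquiv finSumFinEquiv (Matrix.fromBlocks M₁ 0 0 M₂)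

/-- `Z_r`: the `r×r` matrix with `(i,j)` entry `1` iff `i+j = r+1` (1-indexed). -/
def Zm (F : Type*) [Zero F] [One F] (r : ℕ) : Matrix (Fin r) (Fin r) F :=
  Matrix.of fun i j => if (i : ℕ) + (j : ℕ) = r - 1 then 1 else 0

/-- `Z_{r,ε}`: equals `Z_r` for `ε = 1`, and `[[0, -Z_{r/2}],[Z_{r/2},0]]` for `ε = -1`
(and even `r`). -/
def ZmS {F : Type*} [Zero F] [One F] (r : ℕ) (ε : F) : Matrix (Fin r) (Fin r) F :=
  Matrix.of fun i j =>
    if (i : ℕ) + (j : ℕ) = r - 1 then (if (i : ℕ) < r / 2 then ε else 1) else 0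

/-- `F_r`: the `(r-1)×r` matrix with `(i,i)` entries `1`, all other entries `0`. -/
def Fm (F : Type*) [Zero F] [One F] (r : ℕ) : Matrix (Fin (r - 1)) (Fin r) F :=
  Matrix.of fun i j => if (i : ℕ) = (j : ℕ) then 1 else 0

/-- `G_r`: the `(r-1)×r` matrix with `(i,i+1)` entries `1`, all other entries `0`. -/
def Gm (F : Type*) [Zero F] [One F] (r : ℕ) : Matrix (Fin (r - 1)) (Fin r) F :=
  Matrix.of fun i j => if (i : ℕ) + 1 = (j : ℕ) then 1 else 0

/-- `J_r(μ)`: the upper triangular `r×r` Jordan block with eigenvalue `μ`. -/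
def Jm {F : Type*} [Zero F] [One F] (r : ℕ) (μ : F) : Matrix (Fin r) (Fin r) F :=
  Matrix.of fun i j =>
    if (i : ℕ) = (j : ℕ) then μ else if (i : ℕ) + 1 = (j : ℕ) then 1 else 0

/-- `H_r(λ)`: the `r×r` matrix with `λ` on the antidiagonal `i+j = r+1` and `1`
on the adjacent antidiagonal `i+j = r+2` (1-indexed). -/
def Hm {F : Type*} [Zero F] [One F] (r : ℕ) (lam : F) : Matrix (Fin r) (Fin r) F :=
  Matrix.of fun i j =>
    if (i : ℕ) + (j : ℕ) = r - 1 then lam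
    else if (i : ℕ) + (j : ℕ) = r then 1 else 0

/-- `M^{⊘η} = [[0, η M*],[M, 0]]`, a square matrix of size `q + p` for `M` of size `p × q`. -/
def osl {F : Type*} [Ring F] (inv : F → F) (η : F) {p q : ℕ}
    (M : Matrix (Fin p) (Fin q) F) : Matrix (Fin (q + p)) (Fin (q + p)) F :=
  Matrix.reindex finSumFinEquiv finSumFinEquiv
    (Matrix.fromBlocks 0 (η • adjM inv M) M 0)

/-- A matrix triple `(A, B, C)` of size `n × m`: `A : n×m`, `B : m×m`, `C : n×n`. -/
structure MTriple (F : Type*) [Ring F] where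
  m : ℕ
  n : ℕ
  A : Matrix (Fin n) (Fin m) F
  B : Matrix (Fin m) (Fin m) F
  C : Matrix (Fin n) (Fin n) F

/-- Direct sum of matrix triples (blockwise). -/
def MTriple.dsum {F : Type*} [Ring F] (T T' : MTriple F) : MTriple F where
  m := T.m + T'.m
  n := T.n + T'.n
  A := dsumM T.A T'.A
  B := dsumM T.B T'.B
  C := dsumM T.C T'.C

/-- Direct sum of a list of matrix triples. -/
def dsumList {F : Type*} [Ring F] (L : List (MTriple F)) : MTriple F :=
  L.foldr MTriple.dsum ⟨0, 0, 0, 0, 0⟩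

/-- Isomorphism of matrix triples: `A' = S⁻¹ A R`, `B' = R* B R`, `C' = S* C S`
with invertible `R`, `S`, where `*` is the `inv`-adjoint. -/
def MTriple.Iso {F : Type*} [Ring F] (inv : F → F) (T T' : MTriple F) : Prop :=
  ∃ (hm : T.m = T'.m) (hn : T.n = T'.n)
    (R : Matrix (Fin T.m) (Fin T.m) F) (S : Matrix (Fin T.n) (Fin T.n) F),
    IsUnit R ∧ IsUnit S ∧
    S * castM hn hm T'.A = T.A * R ∧
    castM hm hm T'.B = adjM inv R * T.B * R ∧
    castM hn hn T'.C = adjM inv S * T.C * S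

/-- A triple is regular if its first matrix is square and invertible. -/
def MTriple.Regular {F : Type*} [Ring F] (T : MTriple F) : Prop :=
  ∃ h : T.m = T.n, IsUnit (castM h rfl T.A)

/-- A triple is strictly regular if its first matrix is an identity matrix. -/
def MTriple.StrictlyRegular {F : Type*} [Ring F] (T : MTriple F) : Prop :=
  ∃ h : T.m = T.n, castM h rfl T.A = 1

/-- A triple is strictly singular if it is not isomorphic to a direct sum having
a regular direct summand of nonzero size. -/
def MTriple.StrictlySingular {F : Type*} [Ring F] (inv : F → F) (T : MTriple F) : Prop :=
  ¬ ∃ T₁ T₂ : MTriple F, T₁.Regular ∧ T₁.m ≠ 0 ∧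
      (T.Iso inv (T₁.dsum T₂) ∨ T.Iso inv (T₂.dsum T₁))
set_option linter.unusedSectionVars false

section AuxBasic
variable {F : Type*} [DivisionRing F] {inv : F → F}

lemma finSumFinEquiv_symm_eq {m₁ m₂ : ℕ} (i : Fin (m₁ + m₂)) :
    finSumFinEquiv.symm i = if h : i.val < m₁ then Sum.inl ⟨i.val, h⟩
      else Sum.inr ⟨i.val - m₁, by omega⟩ := by
  induction i using Fin.addCases with
  | left x =>
    rw [finSumFinEquiv_symm_apply_castAdd]
    rw [dif_pos (by simpa using x.isLt)]
    simp
  | right x =>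
    rw [finSumFinEquiv_symm_apply_natAdd]
    rw [dif_neg (by simp)]
    congr 1
    exact Fin.ext (by simp)

lemma dsumM_apply {m₁ n₁ m₂ n₂ : ℕ} (M₁ : Matrix (Fin m₁) (Fin n₁) F)
    (M₂ : Matrix (Fin m₂) (Fin n₂) F) (i : Fin (m₁ + m₂)) (j : Fin (n₁ + n₂)) :
    dsumM M₁ M₂ i j =
      if h : i.val < m₁ then
        (if h' : j.val < n₁ then M₁ ⟨i.val, h⟩ ⟨j.val, h'⟩ else 0)
      else
        (if h' : j.val < n₁ then 0
         else M₂ ⟨i.val - m₁, by omega⟩ ⟨j.val - n₁, by omega⟩) := by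
  simp only [dsumM, Matrix.reindex_apply, Matrix.submatrix_apply,
    finSumFinEquiv_symm_eq]
  split <;> split <;> rfl

lemma castM_apply {m n m' n' : ℕ} (hm : m = m') (hn : n = n')
    (M : Matrix (Fin m') (Fin n') F) (i : Fin m) (j : Fin n) :
    castM hm hn M i j = M ⟨i.val, hm ▸ i.isLt⟩ ⟨j.val, hn ▸ j.isLt⟩ := rfl

lemma adjM_apply (inv : F → F) {p q : ℕ} (M : Matrix (Fin p) (Fin q) F)
    (i : Fin q) (j : Fin p) : adjM inv M i j = inv (M j i) := rfl

lemma castM_castM {m n m' n' m'' n'' : ℕ} (hm : m = m') (hn : n = n')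
    (hm' : m' = m'') (hn' : n' = n'') (M : Matrix (Fin m'') (Fin n'') F) :
    castM hm hn (castM hm' hn' M) = castM (hm.trans hm') (hn.trans hn') M := rfl

lemma castM_id {m n : ℕ} (hm : m = m) (hn : n = n) (M : Matrix (Fin m) (Fin n) F) :
    castM hm hn M = M := rfl

end AuxBasic
section AuxAlg
variable {F : Type*} [DivisionRing F] {inv : F → F}
variable (hadd : ∀ a b : F, inv (a + b) = inv a + inv b)
variable (hmul : ∀ a b : F, inv (a * b) = inv b * inv a)
variable (hinvol : ∀ a : F, inv (inv a) = a)

section invFacts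
include hadd

lemma invZero : inv 0 = 0 := by
  have := hadd 0 0
  simpa using this

lemma invNeg (a : F) : inv (-a) = - inv a := by
  have h := hadd a (-a)
  rw [add_neg_cancel, invZero hadd] at h
  exact (neg_eq_of_add_eq_zero_right h.symm).symm

include hmul hinvol
lemma invOne : inv 1 = 1 := by
  have h1 : inv 1 * inv 1 = inv 1 := (hmul 1 1).symm.trans (by rw [mul_one])
  rcases eq_or_ne (inv 1) 0 with h | h
  · have := hinvol 1
    rw [h, invZero hadd] at this
    exact absurd this.symm one_ne_zero
  · exact mul_right_cancel₀ h (by rw [h1, one_mul])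

lemma inv_sign {c : F} (hc : c = 1 ∨ c = -1) : inv c = c := by
  rcases hc with rfl | rfl
  · exact invOne hadd hmul hinvol
  · rw [invNeg hadd, invOne hadd hmul hinvol]

end invFacts

lemma sign_comm {c : F} (hc : c = 1 ∨ c = -1) (x : F) : c * x = x * c := by
  rcases hc with rfl | rfl <;> simp

section adjMFacts

lemma inv_sum {s : Finset α} (f : α → F) (hadd : ∀ a b : F, inv (a + b) = inv a + inv b) :
    inv (∑ x ∈ s, f x) = ∑ x ∈ s, inv (f x) := by
  classical
  induction s using Finset.induction with
  | empty => simpa using invZero hadd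
  | insert a s h ih => rw [Finset.sum_insert h, Finset.sum_insert h, hadd, ih]

include hadd hmul in
lemma adjM_mul {p q r : ℕ} (M : Matrix (Fin p) (Fin q) F) (N : Matrix (Fin q) (Fin r) F) :
    adjM inv (M * N) = adjM inv N * adjM inv M := by
  ext i j
  simp only [adjM_apply, Matrix.mul_apply, inv_sum _ hadd]
  exact Finset.sum_congr rfl fun k _ => hmul _ _

include hadd hmul hinvol in
lemma adjM_one {p : ℕ} : adjM inv (1 : Matrix (Fin p) (Fin p) F) = 1 := by
  ext i j
  simp only [adjM_apply, Matrix.one_apply]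
  rcases eq_or_ne j i with rfl | h
  · simp [invOne hadd hmul hinvol]
  · rw [if_neg h, if_neg (Ne.symm h), invZero hadd]

include hinvol in
lemma adjM_adjM {p q : ℕ} (M : Matrix (Fin p) (Fin q) F) : adjM inv (adjM inv M) = M := by
  ext i j; exact hinvol _

lemma adjM_castM {m n m' n' : ℕ} (hm : m = m') (hn : n = n')
    (M : Matrix (Fin m') (Fin n') F) :
    adjM inv (castM hm hn M) = castM hn hm (adjM inv M) := rfl

lemma adjM_dsumM (hz : inv 0 = 0) {m₁ n₁ m₂ n₂ : ℕ} (M₁ : Matrix (Fin m₁) (Fin n₁) F)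
    (M₂ : Matrix (Fin m₂) (Fin n₂) F) :
    adjM inv (dsumM M₁ M₂) = dsumM (adjM inv M₁) (adjM inv M₂) := by
  ext i j
  simp only [adjM_apply, dsumM_apply]
  split <;> split <;> simp [adjM_apply, hz]

lemma adjM_smul {c : F} (hc : inv c = c) (hcomm : ∀ x : F, c * x = x * c)
    (hmul : ∀ a b : F, inv (a * b) = inv b * inv a)
    {p q : ℕ} (M : Matrix (Fin p) (Fin q) F) :
    adjM inv (c • M) = c • adjM inv M := by
  ext i j
  simp only [adjM_apply, Matrix.smul_apply, smul_eq_mul, hmul, hc, hcomm]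

end adjMFacts

section castMAlg
variable {m n k m' n' k' : ℕ}

lemma castM_mul (hm : m = m') (hk : k = k') (hn : n = n')
    (M : Matrix (Fin m') (Fin k') F) (N : Matrix (Fin k') (Fin n') F) :
    castM hm hn (M * N) = castM hm hk M * castM hk hn N := by
  subst hm hk hn; rfl

lemma castM_one (hm : m = m') : castM hm hm (1 : Matrix (Fin m') (Fin m') F) = 1 := by
  subst hm; rfl

lemma castM_smul (hm : m = m') (hn : n = n') (c : F) (M : Matrix (Fin m') (Fin n') F) :
    castM hm hn (c • M) = c • castM hm hn M := by
  subst hm hn; rfl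

lemma castM_inj (hm : m = m') (hn : n = n') {M N : Matrix (Fin m') (Fin n') F}
    (h : castM hm hn M = castM hm hn N) : M = N := by
  subst hm hn; exact h

lemma isUnit_castM (hm : m = m') {M : Matrix (Fin m') (Fin m') F} (h : IsUnit M) :
    IsUnit (castM hm hm M) := by
  subst hm; exact h

end castMAlg

section dsumMAlg
variable {m₁ n₁ k₁ m₂ n₂ k₂ : ℕ}

lemma dsumM_mul (M₁ : Matrix (Fin m₁) (Fin k₁) F) (N₁ : Matrix (Fin k₁) (Fin n₁) F)
    (M₂ : Matrix (Fin m₂) (Fin k₂) F) (N₂ : Matrix (Fin k₂) (Fin n₂) F) :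
    dsumM M₁ M₂ * dsumM N₁ N₂ = dsumM (M₁ * N₁) (M₂ * N₂) := by
  simp only [dsumM, Matrix.reindex_apply, Matrix.submatrix_mul_equiv,
    Matrix.fromBlocks_multiply]
  simp

lemma dsumM_one : dsumM (1 : Matrix (Fin m₁) (Fin m₁) F) (1 : Matrix (Fin m₂) (Fin m₂) F)
    = 1 := by
  ext i j
  simp only [dsumM_apply, Matrix.one_apply, Fin.ext_iff]
  split_ifs <;> first | rfl | omega

lemma dsumM_smul (c : F) (M₁ : Matrix (Fin m₁) (Fin n₁) F) (M₂ : Matrix (Fin m₂) (Fin n₂) F) :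
    c • dsumM M₁ M₂ = dsumM (c • M₁) (c • M₂) := by
  ext i j
  simp only [Matrix.smul_apply, dsumM_apply]
  split <;> split <;> simp

lemma isUnit_dsumM {M₁ : Matrix (Fin m₁) (Fin m₁) F} {M₂ : Matrix (Fin m₂) (Fin m₂) F}
    (h₁ : IsUnit M₁) (h₂ : IsUnit M₂) : IsUnit (dsumM M₁ M₂) := by
  obtain ⟨N₁, hl₁, hr₁⟩ := isUnit_iff_exists.1 h₁
  obtain ⟨N₂, hl₂, hr₂⟩ := isUnit_iff_exists.1 h₂
  refine isUnit_iff_exists.2 ⟨dsumM N₁ N₂, ?_, ?_⟩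
  · rw [dsumM_mul, hl₁, hl₂, dsumM_one]
  · rw [dsumM_mul, hr₁, hr₂, dsumM_one]

lemma castM_dsumM {m₁' n₁' m₂' n₂' : ℕ} (hm₁ : m₁ = m₁') (hn₁ : n₁ = n₁')
    (hm₂ : m₂ = m₂') (hn₂ : n₂ = n₂') (hm : m₁ + m₂ = m₁' + m₂') (hn : n₁ + n₂ = n₁' + n₂')
    (M₁ : Matrix (Fin m₁') (Fin n₁') F) (M₂ : Matrix (Fin m₂') (Fin n₂') F) :
    castM hm hn (dsumM M₁ M₂) = dsumM (castM hm₁ hn₁ M₁) (castM hm₂ hn₂ M₂) := by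
  subst hm₁ hn₁ hm₂ hn₂; rfl

end dsumMAlg
end AuxAlg
section AuxIso
variable {F : Type*} [DivisionRing F] {inv : F → F}
variable (hadd : ∀ a b : F, inv (a + b) = inv a + inv b)
variable (hmul : ∀ a b : F, inv (a * b) = inv b * inv a)
variable (hinvol : ∀ a : F, inv (inv a) = a)

lemma mul_smul_central {c : F} (hcomm : ∀ x : F, c * x = x * c)
    {p q r : ℕ} (M : Matrix (Fin p) (Fin q) F) (N : Matrix (Fin q) (Fin r) F) :
    M * (c • N) = c • (M * N) := by
  ext i j
  simp only [Matrix.mul_apply, Matrix.smul_apply, smul_eq_mul, Finset.mul_sum]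
  exact Finset.sum_congr rfl fun k _ => by rw [← mul_assoc, ← hcomm, mul_assoc]

include hadd hmul in
lemma iso_trans {T T' T'' : MTriple F} (h1 : T.Iso inv T') (h2 : T'.Iso inv T'') :
    T.Iso inv T'' := by
  obtain ⟨hm, hn, R, S, hR, hS, hA, hB, hC⟩ := h1
  obtain ⟨hm', hn', R', S', hR', hS', hA', hB', hC'⟩ := h2
  refine ⟨hm.trans hm', hn.trans hn', R * castM hm hm R', S * castM hn hn S',
    hR.mul (isUnit_castM hm hR'), hS.mul (isUnit_castM hn hS'), ?_, ?_, ?_⟩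
  · have h := congrArg (castM hn hm) hA'
    rw [castM_mul hn hn hm, castM_castM, castM_mul hn hm hm] at h
    calc S * castM hn hn S' * castM (hn.trans hn') (hm.trans hm') T''.A
        = S * (castM hn hn S' * castM (hn.trans hn') (hm.trans hm') T''.A) := by
          rw [Matrix.mul_assoc]
      _ = S * (castM hn hm T'.A * castM hm hm R') := by rw [h]
      _ = (S * castM hn hm T'.A) * castM hm hm R' := by rw [Matrix.mul_assoc]
      _ = T.A * R * castM hm hm R' := by rw [hA]
      _ = T.A * (R * castM hm hm R') := by rw [Matrix.mul_assoc]
  · have h := congrArg (castM hm hm) hB'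
    rw [castM_castM, castM_mul hm hm hm, castM_mul hm hm hm, ← adjM_castM] at h
    rw [h, hB, adjM_mul hadd hmul, adjM_castM]
    noncomm_ring
  · have h := congrArg (castM hn hn) hC'
    rw [castM_castM, castM_mul hn hn hn, castM_mul hn hn hn, ← adjM_castM] at h
    rw [h, hC, adjM_mul hadd hmul, adjM_castM]
    noncomm_ring

include hadd hmul hinvol in
lemma iso_herm {T T' : MTriple F} (iso : T.Iso inv T') {c d : F}
    (hc : inv c = c) (hcomm : ∀ x : F, c * x = x * c)
    (hd : inv d = d) (hdcomm : ∀ x : F, d * x = x * d)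
    (hB : adjM inv T.B = c • T.B) (hC : adjM inv T.C = d • T.C) :
    adjM inv T'.B = c • T'.B ∧ adjM inv T'.C = d • T'.C := by
  obtain ⟨hm, hn, R, S, hR, hS, hA, hBc, hCc⟩ := iso
  constructor
  · have hB' : T'.B = castM hm.symm hm.symm (adjM inv R * T.B * R) := by
      rw [← hBc, castM_castM, castM_id]
    have key : adjM inv (adjM inv R * T.B * R) = c • (adjM inv R * T.B * R) := by
      rw [adjM_mul hadd hmul, adjM_mul hadd hmul, adjM_adjM hinvol, hB,
        Matrix.smul_mul, mul_smul_central hcomm, ← Matrix.mul_assoc]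
    rw [hB', adjM_castM, key, castM_smul]
  · have hC' : T'.C = castM hn.symm hn.symm (adjM inv S * T.C * S) := by
      rw [← hCc, castM_castM, castM_id]
    have key : adjM inv (adjM inv S * T.C * S) = d • (adjM inv S * T.C * S) := by
      rw [adjM_mul hadd hmul, adjM_mul hadd hmul, adjM_adjM hinvol, hC,
        Matrix.smul_mul, mul_smul_central hdcomm, ← Matrix.mul_assoc]
    rw [hC', adjM_castM, key, castM_smul]

include hadd hmul in
lemma iso_dsum_congr {T₁ T₁' T₂ T₂' : MTriple F} (h1 : T₁.Iso inv T₁')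
    (h2 : T₂.Iso inv T₂') : (T₁.dsum T₂).Iso inv (T₁'.dsum T₂') := by
  obtain ⟨hm1, hn1, R₁, S₁, hR₁, hS₁, hA₁, hB₁, hC₁⟩ := h1
  obtain ⟨hm2, hn2, R₂, S₂, hR₂, hS₂, hA₂, hB₂, hC₂⟩ := h2
  have hm' : T₁.m + T₂.m = T₁'.m + T₂'.m := by omega
  have hn' : T₁.n + T₂.n = T₁'.n + T₂'.n := by omega
  have key1 : dsumM S₁ S₂ * castM hn' hm' (dsumM T₁'.A T₂'.A)
      = dsumM T₁.A T₂.A * dsumM R₁ R₂ := by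
    rw [castM_dsumM hn1 hm1 hn2 hm2, dsumM_mul, dsumM_mul, hA₁, hA₂]
  have key2 : castM hm' hm' (dsumM T₁'.B T₂'.B)
      = adjM inv (dsumM R₁ R₂) * dsumM T₁.B T₂.B * dsumM R₁ R₂ := by
    rw [castM_dsumM hm1 hm1 hm2 hm2, adjM_dsumM (invZero hadd), dsumM_mul, dsumM_mul,
      hB₁, hB₂]
  have key3 : castM hn' hn' (dsumM T₁'.C T₂'.C)
      = adjM inv (dsumM S₁ S₂) * dsumM T₁.C T₂.C * dsumM S₁ S₂ := by
    rw [castM_dsumM hn1 hn1 hn2 hn2, adjM_dsumM (invZero hadd), dsumM_mul, dsumM_mul,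
      hC₁, hC₂]
  exact ⟨hm', hn', dsumM R₁ R₂, dsumM S₁ S₂, isUnit_dsumM hR₁ hR₂,
    isUnit_dsumM hS₁ hS₂, key1, key2, key3⟩

end AuxIso
section AuxPerm
variable {F : Type*} [DivisionRing F] {inv : F → F}

/-- Permutation matrix of `σ`: columns are `e_{σ j}`. -/
def permM (F : Type*) [Zero F] [One F] {p : ℕ} (σ : Equiv.Perm (Fin p)) :
    Matrix (Fin p) (Fin p) F :=
  Matrix.of fun i j => if σ j = i then 1 else 0

lemma mul_permM {p q : ℕ} (M : Matrix (Fin p) (Fin q) F) (σ : Equiv.Perm (Fin q)) :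
    M * permM F σ = Matrix.of fun i j => M i (σ j) := by
  ext i j
  simp only [Matrix.mul_apply, permM, Matrix.of_apply, mul_ite, mul_one, mul_zero]
  rw [Finset.sum_ite_eq (Finset.univ : Finset (Fin q)) (σ j) (fun k => M i k)]
  simp

lemma permM_mul {p q : ℕ} (σ : Equiv.Perm (Fin p)) (M : Matrix (Fin p) (Fin q) F) :
    permM F σ * M = Matrix.of fun i j => M (σ.symm i) j := by
  ext i j
  simp only [Matrix.mul_apply, permM, Matrix.of_apply, ite_mul, one_mul, zero_mul]
  rw [Finset.sum_eq_single (σ.symm i)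
    (fun k _ hk => by rw [if_neg (fun h => hk (by rw [← h, Equiv.symm_apply_apply]))])
    (by simp)]
  simp

lemma adjM_permM (hz : inv 0 = 0) (h1 : inv 1 = 1) {p : ℕ} (σ : Equiv.Perm (Fin p)) :
    adjM inv (permM F σ) = permM F σ.symm := by
  ext i j
  simp only [adjM_apply, permM, Matrix.of_apply]
  by_cases h : σ i = j
  · rw [if_pos h, if_pos (by simp [← h]), h1]
  · rw [if_neg h, if_neg (fun hh => h (by rw [← hh]; simp)), hz]

lemma isUnit_permM {p : ℕ} (σ : Equiv.Perm (Fin p)) : IsUnit (permM F σ) := by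
  refine isUnit_iff_exists.2 ⟨permM F σ.symm, ?_, ?_⟩ <;>
  · rw [permM_mul]
    ext i j
    simp [permM, Matrix.one_apply, Equiv.symm_apply_eq, eq_comm]

end AuxPerm
section AuxStruct
variable {F : Type*} [DivisionRing F] {inv : F → F}
variable (hadd : ∀ a b : F, inv (a + b) = inv a + inv b)
variable (hmul : ∀ a b : F, inv (a * b) = inv b * inv a)
variable (hinvol : ∀ a : F, inv (inv a) = a)

include hadd hmul hinvol in
lemma iso_of_perm {T T' : MTriple F} (hm : T.m = T'.m) (hn : T.n = T'.n)
    (σ : Equiv.Perm (Fin T.m)) (τ : Equiv.Perm (Fin T.n))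
    (hA : ∀ i j, castM hn hm T'.A i j = T.A (τ i) (σ j))
    (hB : ∀ i j, castM hm hm T'.B i j = T.B (σ i) (σ j))
    (hC : ∀ i j, castM hn hn T'.C i j = T.C (τ i) (τ j)) : T.Iso inv T' := by
  have hz := invZero hadd
  have h1 := invOne hadd hmul hinvol
  refine ⟨hm, hn, permM F σ, permM F τ, isUnit_permM σ, isUnit_permM τ, ?_, ?_, ?_⟩
  · rw [permM_mul, mul_permM]
    ext i j
    simp only [Matrix.of_apply, hA]
    rw [Equiv.apply_symm_apply]
  · rw [adjM_permM hz h1, mul_permM, permM_mul]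
    ext i j
    simp only [Matrix.of_apply, Equiv.symm_symm, hB]
  · rw [adjM_permM hz h1, mul_permM, permM_mul]
    ext i j
    simp only [Matrix.of_apply, Equiv.symm_symm, hC]

/-- The empty (0×0) triple. -/
def ETriple (F : Type*) [Ring F] : MTriple F := ⟨0, 0, 0, 0, 0⟩

lemma ETriple_strictReg : (ETriple F).StrictlyRegular :=
  ⟨rfl, by ext i j; exact i.elim0⟩

lemma ETriple_hermB (c : F) : adjM inv (ETriple F).B = c • (ETriple F).B := by
  ext i j; exact i.elim0

lemma ETriple_hermC (c : F) : adjM inv (ETriple F).C = c • (ETriple F).C := by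
  ext i j; exact i.elim0

include hadd hmul hinvol in
lemma iso_pad (T : MTriple F) : T.Iso inv ((ETriple F).dsum T) := by
  refine iso_of_perm hadd hmul hinvol (Nat.zero_add _).symm (Nat.zero_add _).symm
    (Equiv.refl _) (Equiv.refl _) ?_ ?_ ?_ <;>
  · dsimp only [MTriple.dsum]
    intro i j
    show dsumM _ _ _ _ = _
    rw [dsumM_apply, dif_neg (by simp [ETriple]), dif_neg (by simp [ETriple])]
    congr 1 <;> exact Fin.ext (by simp [ETriple])

set_option maxHeartbeats 1000000 in
include hadd hmul hinvol in
lemma iso_assoc (X Y Z : MTriple F) :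
    (X.dsum (Y.dsum Z)).Iso inv ((X.dsum Y).dsum Z) := by
  have hm' : X.m + (Y.m + Z.m) = X.m + Y.m + Z.m := by omega
  have hn' : X.n + (Y.n + Z.n) = X.n + Y.n + Z.n := by omega
  have keyA : ∀ (i : Fin (X.n + (Y.n + Z.n))) (j : Fin (X.m + (Y.m + Z.m))),
      castM hn' hm' (dsumM (dsumM X.A Y.A) Z.A) i j
        = dsumM X.A (dsumM Y.A Z.A) ((Equiv.refl _) i) ((Equiv.refl _) j) := by
    intro i j
    simp only [dsumM_apply, castM_apply, Equiv.refl_apply, Fin.coe_cast]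
    split_ifs <;> first
      | rfl
      | omega
      | (congr 1 <;> simp only [Fin.mk.injEq] <;> omega)
  have keyB : ∀ (i : Fin (X.m + (Y.m + Z.m))) (j : Fin (X.m + (Y.m + Z.m))),
      castM hm' hm' (dsumM (dsumM X.B Y.B) Z.B) i j
        = dsumM X.B (dsumM Y.B Z.B) ((Equiv.refl _) i) ((Equiv.refl _) j) := by
    intro i j
    simp only [dsumM_apply, castM_apply, Equiv.refl_apply, Fin.coe_cast]
    split_ifs <;> first
      | rfl
      | omega
      | (congr 1 <;> simp only [Fin.mk.injEq] <;> omega)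
  have keyC : ∀ (i : Fin (X.n + (Y.n + Z.n))) (j : Fin (X.n + (Y.n + Z.n))),
      castM hn' hn' (dsumM (dsumM X.C Y.C) Z.C) i j
        = dsumM X.C (dsumM Y.C Z.C) ((Equiv.refl _) i) ((Equiv.refl _) j) := by
    intro i j
    simp only [dsumM_apply, castM_apply, Equiv.refl_apply, Fin.coe_cast]
    split_ifs <;> first
      | rfl
      | omega
      | (congr 1 <;> simp only [Fin.mk.injEq] <;> omega)
  exact iso_of_perm hadd hmul hinvol hm' hn' (Equiv.refl _) (Equiv.refl _) keyA keyB keyC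

/-- The permutation of `Fin (a+b+c)` swapping the middle `b` block and the last `c`
block. -/
def swEquiv (a b c : ℕ) : Equiv.Perm (Fin (a + b + c)) where
  toFun i := ⟨if i.val < a then i.val else if i.val < a + b then i.val + c
    else i.val - b, by have := i.isLt; split_ifs <;> omega⟩
  invFun i := ⟨if i.val < a then i.val else if i.val < a + c then i.val + b
    else i.val - c, by have := i.isLt; split_ifs <;> omega⟩
  left_inv i := by
    have := i.isLt
    apply Fin.ext
    simp only
    split_ifs <;> omega
  right_inv i := by
    have := i.isLt
    apply Fin.ext
    simp only
    split_ifs <;> omega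

lemma swEquiv_val (a b c : ℕ) (i : Fin (a + b + c)) :
    (swEquiv a b c i).val = if i.val < a then i.val else if i.val < a + b then i.val + c
      else i.val - b := rfl

lemma swEquiv_symm_val (a b c : ℕ) (i : Fin (a + b + c)) :
    ((swEquiv a b c).symm i).val = if i.val < a then i.val
      else if i.val < a + c then i.val + b else i.val - c := rfl

set_option maxHeartbeats 4000000 in
include hadd hmul hinvol in
lemma iso_swap23 (X Y Z : MTriple F) :
    ((X.dsum Y).dsum Z).Iso inv ((X.dsum Z).dsum Y) := by
  have hm' : X.m + Y.m + Z.m = X.m + Z.m + Y.m := by omega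
  have hn' : X.n + Y.n + Z.n = X.n + Z.n + Y.n := by omega
  have keyA : ∀ (i : Fin (X.n + Y.n + Z.n)) (j : Fin (X.m + Y.m + Z.m)),
      castM hn' hm' (dsumM (dsumM X.A Z.A) Y.A) i j
        = dsumM (dsumM X.A Y.A) Z.A ((swEquiv X.n Y.n Z.n).symm i)
            ((swEquiv X.m Y.m Z.m).symm j) := by
    intro i j
    simp only [dsumM_apply, castM_apply, Fin.coe_cast, swEquiv_symm_val]
    split_ifs <;> first
      | rfl
      | omega
      | (congr 1 <;> simp only [Fin.mk.injEq] <;> omega)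
  have keyB : ∀ (i j : Fin (X.m + Y.m + Z.m)),
      castM hm' hm' (dsumM (dsumM X.B Z.B) Y.B) i j
        = dsumM (dsumM X.B Y.B) Z.B ((swEquiv X.m Y.m Z.m).symm i)
            ((swEquiv X.m Y.m Z.m).symm j) := by
    intro i j
    simp only [dsumM_apply, castM_apply, Fin.coe_cast, swEquiv_symm_val]
    split_ifs <;> first
      | rfl
      | omega
      | (congr 1 <;> simp only [Fin.mk.injEq] <;> omega)
  have keyC : ∀ (i j : Fin (X.n + Y.n + Z.n)),
      castM hn' hn' (dsumM (dsumM X.C Z.C) Y.C) i j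
        = dsumM (dsumM X.C Y.C) Z.C ((swEquiv X.n Y.n Z.n).symm i)
            ((swEquiv X.n Y.n Z.n).symm j) := by
    intro i j
    simp only [dsumM_apply, castM_apply, Fin.coe_cast, swEquiv_symm_val]
    split_ifs <;> first
      | rfl
      | omega
      | (congr 1 <;> simp only [Fin.mk.injEq] <;> omega)
  exact iso_of_perm hadd hmul hinvol hm' hn' (swEquiv X.m Y.m Z.m).symm
    (swEquiv X.n Y.n Z.n).symm keyA keyB keyC

end AuxStruct
section AuxFinal
variable {F : Type*} [DivisionRing F] {inv : F → F}
variable (hadd : ∀ a b : F, inv (a + b) = inv a + inv b)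
variable (hmul : ∀ a b : F, inv (a * b) = inv b * inv a)
variable (hinvol : ∀ a : F, inv (inv a) = a)

lemma herm_dsum {c : F} (hz : inv 0 = 0) {m₁ m₂ : ℕ} {B₁ : Matrix (Fin m₁) (Fin m₁) F}
    {B₂ : Matrix (Fin m₂) (Fin m₂) F} (h1 : adjM inv B₁ = c • B₁)
    (h2 : adjM inv B₂ = c • B₂) : adjM inv (dsumM B₁ B₂) = c • dsumM B₁ B₂ := by
  rw [adjM_dsumM hz, dsumM_smul, h1, h2]

lemma herm_extract {c : F} {m₁ m₂ : ℕ} {B₁ : Matrix (Fin m₁) (Fin m₁) F}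
    {B₂ : Matrix (Fin m₂) (Fin m₂) F}
    (h : adjM inv (dsumM B₁ B₂) = c • dsumM B₁ B₂) :
    adjM inv B₁ = c • B₁ ∧ adjM inv B₂ = c • B₂ := by
  constructor
  · ext i j
    have hh := congrFun (congrFun h ⟨i.val, by omega⟩) ⟨j.val, by omega⟩
    simp only [adjM_apply, Matrix.smul_apply, dsumM_apply] at hh ⊢
    rw [dif_pos (by omega), dif_pos (by omega), dif_pos i.isLt, dif_pos j.isLt] at hh
    simpa using hh
  · ext i j
    have hh := congrFun (congrFun h ⟨m₁ + i.val, by omega⟩) ⟨m₁ + j.val, by omega⟩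
    simp only [adjM_apply, Matrix.smul_apply, dsumM_apply] at hh ⊢
    rw [dif_neg (by omega), dif_neg (by omega), dif_neg (by omega), dif_neg (by omega)]
      at hh
    have e1 : m₁ + i.val - m₁ = i.val := by omega
    have e2 : m₁ + j.val - m₁ = j.val := by omega
    simp only [e1, e2, Fin.eta] at hh
    exact hh

lemma strictReg_dsum {T T' : MTriple F} (h1 : T.StrictlyRegular)
    (h2 : T'.StrictlyRegular) : (T.dsum T').StrictlyRegular := by
  obtain ⟨e1, he1⟩ := h1
  obtain ⟨e2, he2⟩ := h2
  have e : T.m + T'.m = T.n + T'.n := by omega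
  have key : castM e rfl (dsumM T.A T'.A) = 1 := by
    rw [castM_dsumM e1 rfl e2 rfl, he1, he2, dsumM_one]
  exact ⟨e, key⟩

include hadd hmul hinvol in
lemma reg_strict {T : MTriple F} (hreg : T.Regular) :
    ∃ T' : MTriple F, T'.StrictlyRegular ∧ T.Iso inv T' := by
  obtain ⟨h, hu⟩ := hreg
  obtain ⟨Ninv, hl, hr⟩ := isUnit_iff_exists.1 hu
  refine ⟨⟨T.m, T.m, 1, adjM inv Ninv * T.B * Ninv, castM h h T.C⟩,
    ⟨rfl, castM_id _ _ _⟩, rfl, h.symm, Ninv, 1, isUnit_iff_exists.2 ⟨castM h rfl T.A, hr, hl⟩,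
    isUnit_one, ?_, ?_, ?_⟩
  · show (1 : Matrix (Fin T.n) (Fin T.n) F) * castM h.symm rfl (1 : Matrix (Fin T.m) (Fin T.m) F)
      = T.A * Ninv
    have : T.A = castM h.symm rfl (castM h rfl T.A) := by
      rw [castM_castM, castM_id]
    rw [Matrix.one_mul, this, show Ninv = castM rfl rfl Ninv from rfl,
      ← castM_mul h.symm rfl rfl, hl]
  · show castM rfl rfl (adjM inv Ninv * T.B * Ninv) = adjM inv Ninv * T.B * Ninv
    exact castM_id _ _ _
  · show castM h.symm h.symm (castM h h T.C)
      = adjM inv (1 : Matrix (Fin T.n) (Fin T.n) F) * T.C * 1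
    rw [castM_castM, castM_id, adjM_one hadd hmul hinvol, Matrix.one_mul, Matrix.mul_one]

end AuxFinal
/-- Every `(ε,δ)`-triple over a division ring `F` of characteristic not 2 with involution
`inv` (identity involution unless `ε = δ = 1`) is isomorphic to a direct sum of a strictly
regular `(ε,δ)`-triple and a strictly singular `(ε,δ)`-triple. -/
theorem stmt2 {F : Type*} [DivisionRing F] (h2 : (2 : F) ≠ 0) (inv : F → F)
    (hadd : ∀ a b : F, inv (a + b) = inv a + inv b)
    (hmul : ∀ a b : F, inv (a * b) = inv b * inv a)
    (hinvol : ∀ a : F, inv (inv a) = a)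
    (ε δ : F) (hε : ε = 1 ∨ ε = -1) (hδ : δ = 1 ∨ δ = -1)
    (hid : (∀ a : F, inv a = a) ∨ (ε = 1 ∧ δ = 1))
    (T : MTriple F) (hB : adjM inv T.B = ε • T.B) (hC : adjM inv T.C = δ • T.C) :
    ∃ T₀ T₁ : MTriple F,
      T₀.StrictlyRegular ∧
      adjM inv T₀.B = ε • T₀.B ∧ adjM inv T₀.C = δ • T₀.C ∧
      T₁.StrictlySingular inv ∧
      adjM inv T₁.B = ε • T₁.B ∧ adjM inv T₁.C = δ • T₁.C ∧
      T.Iso inv (T₀.dsum T₁) := by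
  have hz := invZero hadd
  have hcε : inv ε = ε := inv_sign hadd hmul hinvol hε
  have hcδ : inv δ = δ := inv_sign hadd hmul hinvol hδ
  have hcomε := sign_comm hε
  have hcomδ := sign_comm hδ
  suffices H : ∀ N (T : MTriple F), T.m + T.n ≤ N →
      adjM inv T.B = ε • T.B → adjM inv T.C = δ • T.C →
      ∃ T₀ T₁ : MTriple F, T₀.StrictlyRegular ∧
        adjM inv T₀.B = ε • T₀.B ∧ adjM inv T₀.C = δ • T₀.C ∧
        T₁.StrictlySingular inv ∧
        adjM inv T₁.B = ε • T₁.B ∧ adjM inv T₁.C = δ • T₁.C ∧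
        T.Iso inv (T₀.dsum T₁) by
    exact H (T.m + T.n) T le_rfl hB hC
  intro N
  induction N using Nat.strong_induction_on with
  | _ N IH =>
    intro T hTN hBT hCT
    by_cases hss : T.StrictlySingular inv
    · exact ⟨ETriple F, T, ETriple_strictReg, ETriple_hermB ε, ETriple_hermC δ, hss,
        hBT, hCT, iso_pad hadd hmul hinvol T⟩
    · simp only [MTriple.StrictlySingular, not_not] at hss
      obtain ⟨T₁, T₂, hreg, hne, hcase⟩ := hss
      obtain ⟨T1s, hsrS, isoS⟩ := reg_strict hadd hmul hinvol hreg
      rcases hcase with isoA | isoA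
      · have hermD := iso_herm hadd hmul hinvol isoA hcε hcomε hcδ hcomδ hBT hCT
        have hBsplit := herm_extract (inv := inv) hermD.1
        have hCsplit := herm_extract (inv := inv) hermD.2
        have dims := isoA
        obtain ⟨hmE, hnE, -, -, -, -, -, -, -⟩ := dims
        have hmE' : T.m = T₁.m + T₂.m := hmE
        have hnE' : T.n = T₁.n + T₂.n := hnE
        obtain ⟨T₀', T₁'', hsr0, hB0, hC0, hss1, hB1, hC1, iso2⟩ :=
          IH (T₂.m + T₂.n) (by omega) T₂ le_rfl hBsplit.2 hCsplit.2
        have hermS := iso_herm hadd hmul hinvol isoS hcε hcomε hcδ hcomδ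
          hBsplit.1 hCsplit.1
        refine ⟨T1s.dsum T₀', T₁'', strictReg_dsum hsrS hsr0,
          herm_dsum hz hermS.1 hB0, herm_dsum hz hermS.2 hC0, hss1, hB1, hC1, ?_⟩
        exact iso_trans hadd hmul (iso_trans hadd hmul isoA
          (iso_dsum_congr hadd hmul isoS iso2)) (iso_assoc hadd hmul hinvol T1s T₀' T₁'')
      · have hermD := iso_herm hadd hmul hinvol isoA hcε hcomε hcδ hcomδ hBT hCT
        have hBsplit := herm_extract (inv := inv) hermD.1
        have hCsplit := herm_extract (inv := inv) hermD.2
        have dims := isoA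
        obtain ⟨hmE, hnE, -, -, -, -, -, -, -⟩ := dims
        have hmE' : T.m = T₂.m + T₁.m := hmE
        have hnE' : T.n = T₂.n + T₁.n := hnE
        obtain ⟨T₀', T₁'', hsr0, hB0, hC0, hss1, hB1, hC1, iso2⟩ :=
          IH (T₂.m + T₂.n) (by omega) T₂ le_rfl hBsplit.1 hCsplit.1
        have hermS := iso_herm hadd hmul hinvol isoS hcε hcomε hcδ hcomδ
          hBsplit.2 hCsplit.2
        refine ⟨T₀'.dsum T1s, T₁'', strictReg_dsum hsr0 hsrS,
          herm_dsum hz hB0 hermS.1, herm_dsum hz hC0 hermS.2, hss1, hB1, hC1, ?_⟩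
        exact iso_trans hadd hmul (iso_trans hadd hmul isoA
          (iso_dsum_congr hadd hmul iso2 isoS)) (iso_swap23 hadd hmul hinvol T₀' T₁'' T1s)
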